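/- Let (X,f) be a weakly mixing dynamical system with the shadowing property. For every ε>0 there exists M>0 such that for all k ≥ 2, points x_1,…,x_k ∈ X, integers 0 ≤ a_1 ≤ b_1 < a_2 ≤ b_2 < … < a_k ≤ b_k with a_i − b_{i−1} ≥ M for i = 2,…,k, and every p ≥ M + b_k − a_1, there exists a regularly recurrent point z ∈ X such that d(f^j(z), f^{np+j}(z)) < ε for all n, j ≥ 0 and d(f^{np+j}(z), f^j(x_i)) < ε for all a_i ≤ j ≤ b_i, 1 ≤ i ≤ k, and n ≥ 0. -/
import Mathlib

set_option maxHeartbeats 1600000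


open Set Function

variable {X : Type*}

/-- A `δ`-pseudo-orbit of `f`. -/
def IsPseudoOrbit [MetricSpace X] (f : X → X) (δ : ℝ) (x : ℕ → X) : Prop :=
  ∀ n : ℕ, dist (f (x n)) (x (n + 1)) < δ

/-- `z` ε-traces the sequence `x`. -/
def Traces [MetricSpace X] (f : X → X) (ε : ℝ) (z : X) (x : ℕ → X) : Prop :=
  ∀ n : ℕ, dist (f^[n] z) (x n) < ε

/-- The shadowing property. -/
def HasShadowing [MetricSpace X] (f : X → X) : Prop :=
  ∀ ε > (0 : ℝ), ∃ δ > (0 : ℝ), ∀ x : ℕ → X, IsPseudoOrbit f δ x → ∃ z : X, Traces f ε z x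

/-- The shadowing property of the restriction of `f` to an invariant set `S`. -/
def HasShadowingOn [MetricSpace X] (f : X → X) (S : Set X) : Prop :=
  ∀ ε > (0 : ℝ), ∃ δ > (0 : ℝ), ∀ x : ℕ → X, (∀ n, x n ∈ S) → IsPseudoOrbit f δ x →
    ∃ z ∈ S, Traces f ε z x

/-- Non-wandering point. -/
def NonWanderingPt [TopologicalSpace X] (f : X → X) (x : X) : Prop :=
  ∀ U ∈ nhds x, ∃ k : ℕ, 1 ≤ k ∧ ∃ y ∈ U, f^[k] y ∈ U

/-- The (forward) orbit of a point. -/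
def orbitSet (f : X → X) (x : X) : Set X := Set.range fun n : ℕ => f^[n] x

/-- Recurrent point. -/
def RecurrentPt [TopologicalSpace X] (f : X → X) (x : X) : Prop :=
  ∀ U ∈ nhds x, ∃ k : ℕ, 1 ≤ k ∧ f^[k] x ∈ U

/-- Minimal point: every point of the orbit closure has `x` in its own orbit closure,
i.e. the orbit closure of `x` is a minimal set. -/
def MinimalPt [TopologicalSpace X] (f : X → X) (x : X) : Prop :=
  ∀ y ∈ closure (orbitSet f x), x ∈ closure (orbitSet f y)

/-- Regularly recurrent point. -/
def RegRecPt [TopologicalSpace X] (f : X → X) (x : X) : Prop :=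
  ∀ U ∈ nhds x, ∃ k : ℕ, 1 ≤ k ∧ ∀ n : ℕ, f^[k * n] x ∈ U

/-- Equicontinuity of the family of iterates of `f`. -/
def EquicontinuousMap [MetricSpace X] (f : X → X) : Prop :=
  ∀ ε > (0 : ℝ), ∃ δ > (0 : ℝ), ∀ x y : X, dist x y < δ →
    ∀ n : ℕ, dist (f^[n] x) (f^[n] y) < ε

/-- `u` is a sensitive point of the subsystem on `S`. -/
def SensitivePtOn [MetricSpace X] (f : X → X) (S : Set X) (u : X) : Prop :=
  ∃ δ > (0 : ℝ), ∀ U ∈ nhds u, ∃ n : ℕ, ∃ a ∈ U ∩ S, ∃ b ∈ U ∩ S,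
    dist (f^[n] a) (f^[n] b) > δ

/-- `u` is a sensitive point of `(X,f)`. -/
def SensitivePt [MetricSpace X] (f : X → X) (u : X) : Prop :=
  ∃ δ > (0 : ℝ), ∀ U ∈ nhds u, ∃ n : ℕ, ∃ a ∈ U, ∃ b ∈ U,
    dist (f^[n] a) (f^[n] b) > δ

/-- Topological transitivity. -/
def TopTransitive {Y : Type*} [TopologicalSpace Y] (g : Y → Y) : Prop :=
  ∀ U V : Set Y, IsOpen U → U.Nonempty → IsOpen V → V.Nonempty →
    ∃ n : ℕ, 1 ≤ n ∧ (g^[n] '' U ∩ V).Nonempty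

/-- Weak mixing: the product system is transitive. -/
def WeaklyMixing [TopologicalSpace X] (f : X → X) : Prop :=
  TopTransitive (fun p : X × X => (f p.1, f p.2))

/-- Strong mixing. -/
def StronglyMixing {Y : Type*} [TopologicalSpace Y] (g : Y → Y) : Prop :=
  ∀ U V : Set Y, IsOpen U → U.Nonempty → IsOpen V → V.Nonempty →
    ∃ N : ℕ, ∀ n ≥ N, (g^[n] '' U ∩ V).Nonempty

/-- The shift map on the full shift over `d` symbols. -/
def shiftMap (d : ℕ) : (ℕ → Fin d) → (ℕ → Fin d) := fun x n => x (n + 1)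

/-- `π` is a factor map from the subsystem `(Y, f^[m])` onto the full shift on `d` symbols. -/
def FactorOntoShift [TopologicalSpace X] (f : X → X) (m : ℕ) (Y : Set X) (d : ℕ)
    (π : X → (ℕ → Fin d)) : Prop :=
  ContinuousOn π Y ∧ π '' Y = Set.univ ∧ ∀ y ∈ Y, π (f^[m] y) = shiftMap d (π y)

set_option maxHeartbeats 1600000
section AuxWMS

set_option linter.unusedSectionVars false
set_option linter.unusedVariables false

variable [MetricSpace X] [CompactSpace X]

private lemma iterate_prod_map (f : X → X) (n : ℕ) (q : X × X) :
    (fun p : X × X => (f p.1, f p.2))^[n] q = (f^[n] q.1, f^[n] q.2) := by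
  induction n generalizing q with
  | zero => simp
  | succ n ih =>
      rw [Function.iterate_succ_apply, Function.iterate_succ_apply,
        Function.iterate_succ_apply, ih]

private lemma transitive_of_wm (f : X → X) (hwm : WeaklyMixing f) : TopTransitive f := by
  intro U V hU hUne hV hVne
  obtain ⟨u, hu⟩ := hUne
  obtain ⟨n, hn, q, hq⟩ := hwm (U ×ˢ (univ : Set X)) (V ×ˢ (univ : Set X))
    (hU.prod isOpen_univ) ⟨(u, u), hu, mem_univ u⟩
    (hV.prod isOpen_univ) (hVne.prod ⟨u, mem_univ u⟩)
  obtain ⟨⟨w, hwU, hwq⟩, hqV⟩ := hq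
  refine ⟨n, hn, q.1, ⟨w.1, hwU.1, ?_⟩, hqV.1⟩
  have := congrArg Prod.fst hwq
  rwa [iterate_prod_map] at this

private lemma surjective_of_wm (f : X → X) (hf : Continuous f) (hwm : WeaklyMixing f) :
    Function.Surjective f := by
  intro y
  by_contra hy
  have htr := transitive_of_wm f hwm
  have hcl : IsClosed (range f) := (isCompact_range hf).isClosed
  obtain ⟨n, hn1, w, hw⟩ := htr univ ((range f)ᶜ) isOpen_univ ⟨y, mem_univ y⟩
    hcl.isOpen_compl ⟨y, fun hmem => hy hmem⟩
  obtain ⟨⟨x, _, hxw⟩, hwc⟩ := hw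
  refine hwc ⟨f^[n - 1] x, ?_⟩
  have h1 : f^[n - 1 + 1] x = w := by rw [(by omega : n - 1 + 1 = n), hxw]
  rw [Function.iterate_succ_apply'] at h1
  exact h1

private def ChainFrom (f : X → X) (δ : ℝ) (u v : X) (n : ℕ) : Prop :=
  ∃ g : ℕ → X, g 0 = u ∧ g n = v ∧ ∀ i < n, dist (f (g i)) (g (i + 1)) < δ

private lemma chainFrom_append {f : X → X} {δ : ℝ} {u v w : X} {n m : ℕ}
    (h1 : ChainFrom f δ u v n) (h2 : ChainFrom f δ v w m) :
    ChainFrom f δ u w (n + m) := by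
  obtain ⟨g1, hg10, hg1n, hg1⟩ := h1
  obtain ⟨g2, hg20, hg2m, hg2⟩ := h2
  refine ⟨fun i => if i ≤ n then g1 i else g2 (i - n), by simp [hg10], ?_, ?_⟩
  · by_cases hm : m = 0
    · subst hm
      simp only [Nat.add_zero, le_refl, if_pos]
      rw [hg1n, ← hg20, ← hg2m]
    · have : ¬ (n + m ≤ n) := by omega
      simp only [this, if_neg, Nat.add_sub_cancel_left, hg2m, not_false_iff]
  · intro i hi
    by_cases h : i + 1 ≤ n
    · have h' : i ≤ n := by omega
      simpa [h, h'] using hg1 i (by omega)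
    · by_cases h' : i ≤ n
      · -- i = n, so m ≥ 1
        have hin : i = n := by omega
        have hm1 : 1 ≤ m := by omega
        have e1 : (if i ≤ n then g1 i else g2 (i - n)) = g2 0 := by
          simp [h', hin, hg1n, ← hg20]
        have e2 : (if i + 1 ≤ n then g1 (i + 1) else g2 (i + 1 - n)) = g2 1 := by
          simp [h, hin]
        dsimp only
        rw [e1, e2]
        exact hg2 0 (by omega)
      · have e1 : (if i ≤ n then g1 i else g2 (i - n)) = g2 (i - n) := by simp [h']
        have e2 : (if i + 1 ≤ n then g1 (i + 1) else g2 (i + 1 - n)) = g2 (i - n + 1) := by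
          have : i + 1 - n = i - n + 1 := by omega
          simp [h, this]
        dsimp only
        rw [e1, e2]
        exact hg2 (i - n) (by omega)

private lemma chain_helper {f : X → X} {δ η : ℝ}
    (hmod : ∀ x y : X, dist x y < η → dist (f x) (f y) < δ / 2)
    (u v w : X) (n : ℕ) (hn : 1 ≤ n) (h1 : dist u w < η) (h2 : dist (f^[n] w) v < δ / 2)
    (hδ : 0 < δ) : ChainFrom f δ u v n := by
  refine ⟨fun i => if i = 0 then u else if i = n then v else f^[i] w, by simp, ?_, ?_⟩
  · have : n ≠ 0 := by omega
    simp [this]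
  · intro i hi
    dsimp only
    by_cases hi0 : i = 0
    · subst hi0
      simp only [if_pos rfl]
      by_cases h1n : 1 = n
      · have e : (if (1:ℕ) = 0 then u else if 1 = n then v else f^[1] w) = v := by
          rw [if_neg (by omega : ¬ (1:ℕ) = 0), if_pos h1n]
        rw [e]
        calc dist (f u) v ≤ dist (f u) (f w) + dist (f w) v := dist_triangle _ _ _
          _ < δ / 2 + δ / 2 := by
              have h2' : dist (f w) v < δ / 2 := by
                have : f^[n] w = f w := by rw [← h1n]; simp
                rwa [this] at h2
              exact add_lt_add (hmod u w h1) h2'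
          _ = δ := by ring
      · have e : (if (1:ℕ) = 0 then u else if 1 = n then v else f^[1] w) = f w := by
          simp [h1n]
        rw [e]
        calc dist (f u) (f w) < δ / 2 := hmod u w h1
          _ < δ := by linarith
    · have hi1 : i ≠ n := by omega
      have e0 : (if i = 0 then u else if i = n then v else f^[i] w) = f^[i] w := by
        simp [hi0, hi1]
      rw [e0]
      by_cases hsn : i + 1 = n
      · have e : (if i + 1 = 0 then u else if i + 1 = n then v else f^[i+1] w) = v := by
          rw [if_neg (by omega : ¬ i + 1 = 0), if_pos hsn]
        rw [e, ← Function.iterate_succ_apply' f i w]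
        calc dist (f^[i + 1] w) v = dist (f^[n] w) v := by rw [hsn]
          _ < δ / 2 := h2
          _ < δ := by linarith
      · have e : (if i + 1 = 0 then u else if i + 1 = n then v else f^[i+1] w) = f^[i+1] w := by
          simp [hsn]
        rw [e, ← Function.iterate_succ_apply' f i w, dist_self]
        exact hδ

private lemma chain_mixing (f : X → X) (hf : Continuous f) (hwm : WeaklyMixing f)
    [Nonempty X] {δ : ℝ} (hδ : 0 < δ) :
    ∃ M : ℕ, 1 ≤ M ∧ ∀ n, M ≤ n → ∀ u v : X, ChainFrom f δ u v n := by
  classical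
  have htr : TopTransitive f := transitive_of_wm f hwm
  have hsurj : Function.Surjective f := surjective_of_wm f hf hwm
  obtain ⟨η0, hη0, hmod0⟩ : ∃ η > (0:ℝ), ∀ x y : X, dist x y < η → dist (f x) (f y) < δ / 2 := by
    have huc := CompactSpace.uniformContinuous_of_continuous hf
    rw [Metric.uniformContinuous_iff] at huc
    obtain ⟨η, hη, h⟩ := huc (δ / 2) (by positivity)
    exact ⟨η, hη, fun x y hxy => h hxy⟩
  set η : ℝ := min η0 (δ / 2) with hηdef
  have hη : 0 < η := by positivity
  have hmod : ∀ x y : X, dist x y < η → dist (f x) (f y) < δ / 2 :=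
    fun x y h => hmod0 x y (lt_of_lt_of_le h (min_le_left _ _))
  set ρ : ℝ := min (η / 2) (δ / 4) with hρdef
  have hρ : 0 < ρ := by positivity
  have hρη : 2 * ρ ≤ η := by
    have := min_le_left (η / 2) (δ / 4); linarith
  have hρδ : 2 * ρ ≤ δ / 2 := by
    have := min_le_right (η / 2) (δ / 4); linarith
  obtain ⟨y₁⟩ := ‹Nonempty X›
  -- loops of two consecutive lengths
  obtain ⟨w₂, hw₂⟩ := hsurj y₁
  have hw₂b : w₂ ∈ f ⁻¹' (Metric.ball y₁ ρ) := by
    simp only [mem_preimage, Metric.mem_ball, hw₂, dist_self]; exact hρ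
  obtain ⟨n₀, hn₀1, q, hq⟩ := hwm ((Metric.ball y₁ ρ) ×ˢ (f ⁻¹' (Metric.ball y₁ ρ)))
    ((Metric.ball y₁ ρ) ×ˢ (Metric.ball y₁ ρ))
    (Metric.isOpen_ball.prod (Metric.isOpen_ball.preimage hf))
    ⟨(y₁, w₂), Metric.mem_ball_self hρ, hw₂b⟩
    (Metric.isOpen_ball.prod Metric.isOpen_ball)
    ⟨(y₁, y₁), Metric.mem_ball_self hρ, Metric.mem_ball_self hρ⟩
  obtain ⟨⟨w, hwU, hwq⟩, hqV⟩ := hq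
  have hq1 : f^[n₀] w.1 = q.1 := by
    have := congrArg Prod.fst hwq; rwa [iterate_prod_map] at this
  have hq2 : f^[n₀] w.2 = q.2 := by
    have := congrArg Prod.snd hwq; rwa [iterate_prod_map] at this
  have loopA : ChainFrom f δ y₁ y₁ n₀ := by
    refine chain_helper hmod y₁ y₁ w.1 n₀ hn₀1 ?_ ?_ hδ
    · have : dist w.1 y₁ < ρ := Metric.mem_ball.mp hwU.1
      rw [dist_comm]; linarith
    · have : dist q.1 y₁ < ρ := Metric.mem_ball.mp hqV.1
      rw [hq1]; linarith
  obtain ⟨ℓ, hℓ1, hLa, hLb⟩ :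
      ∃ ℓ : ℕ, 1 ≤ ℓ ∧ ChainFrom f δ y₁ y₁ ℓ ∧ ChainFrom f δ y₁ y₁ (ℓ + 1) := by
    by_cases hn₀ : n₀ = 1
    · refine ⟨1, le_refl 1, by rwa [hn₀] at loopA, ?_⟩
      have := chainFrom_append (by rwa [hn₀] at loopA : ChainFrom f δ y₁ y₁ 1)
        (by rwa [hn₀] at loopA : ChainFrom f δ y₁ y₁ 1)
      exact this
    · refine ⟨n₀ - 1, by omega, ?_, by rwa [(by omega : n₀ - 1 + 1 = n₀)]⟩
      refine chain_helper hmod y₁ y₁ (f w.2) (n₀ - 1) (by omega) ?_ ?_ hδ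
      · have : dist (f w.2) y₁ < ρ := Metric.mem_ball.mp hwU.2
        rw [dist_comm]; linarith
      · have he : f^[n₀ - 1] (f w.2) = f^[n₀] w.2 := by
          obtain ⟨m, hm⟩ : ∃ m, n₀ = m + 1 := ⟨n₀ - 1, by omega⟩
          subst hm
          simp [Function.iterate_succ_apply]
        rw [he, hq2]
        have : dist q.2 y₁ < ρ := Metric.mem_ball.mp hqV.2
        linarith
  have hloops : ∀ n, ℓ * ℓ ≤ n → ChainFrom f δ y₁ y₁ n := by
    have hiℓ : ∀ i, 1 ≤ i → ChainFrom f δ y₁ y₁ (i * ℓ) := by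
      intro i hi
      induction i with
      | zero => omega
      | succ i ih =>
          by_cases hi0 : i = 0
          · subst hi0; simpa using hLa
          · have := chainFrom_append (ih (by omega)) hLa
            rwa [(by ring : i * ℓ + ℓ = (i + 1) * ℓ)] at this
    have hij : ∀ j i, 1 ≤ i → ChainFrom f δ y₁ y₁ (i * ℓ + j * (ℓ + 1)) := by
      intro j
      induction j with
      | zero => intro i hi; simpa using hiℓ i hi
      | succ j ih =>
          intro i hi
          have := chainFrom_append (ih i hi) hLb
          rwa [(by ring : i * ℓ + j * (ℓ + 1) + (ℓ + 1) = i * ℓ + (j + 1) * (ℓ + 1))] at this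
    intro n hn
    have hq' := Nat.div_add_mod n ℓ
    have hr : n % ℓ < ℓ := Nat.mod_lt _ (by omega)
    have hqℓ : ℓ ≤ n / ℓ := (Nat.le_div_iff_mul_le (by omega)).mpr hn
    have h1 : 1 ≤ n / ℓ - n % ℓ := by omega
    have h2 : (n / ℓ - n % ℓ) * ℓ + (n % ℓ) * (ℓ + 1) = n := by
      have e1 : (n / ℓ - n % ℓ) * ℓ = n / ℓ * ℓ - n % ℓ * ℓ := Nat.sub_mul _ _ _
      have e2 : (n % ℓ) * (ℓ + 1) = n % ℓ * ℓ + n % ℓ := by ring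
      have e3 : n % ℓ * ℓ ≤ n / ℓ * ℓ := Nat.mul_le_mul_right ℓ (by omega)
      have e4 : ℓ * (n / ℓ) = n / ℓ * ℓ := Nat.mul_comm _ _
      omega
    have := hij (n % ℓ) (n / ℓ - n % ℓ) h1
    rwa [h2] at this
  -- finite net
  obtain ⟨t, ht⟩ := IsCompact.elim_finite_subcover isCompact_univ
    (fun y : X => Metric.ball y ρ) (fun y => Metric.isOpen_ball)
    (fun x _ => mem_iUnion.mpr ⟨x, Metric.mem_ball_self hρ⟩)
  have hPex : ∀ y : X, ∃ nw : ℕ × X, 1 ≤ nw.1 ∧ dist nw.2 y < ρ ∧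
      dist (f^[nw.1] nw.2) y₁ < ρ := by
    intro y
    obtain ⟨n, hn, z, ⟨w', hw'U, hw'z⟩, hzV⟩ := htr (Metric.ball y ρ) (Metric.ball y₁ ρ)
      Metric.isOpen_ball ⟨y, Metric.mem_ball_self hρ⟩
      Metric.isOpen_ball ⟨y₁, Metric.mem_ball_self hρ⟩
    exact ⟨(n, w'), hn, Metric.mem_ball.mp hw'U, by rw [hw'z]; exact Metric.mem_ball.mp hzV⟩
  have hQex : ∀ y : X, ∃ mw : ℕ × X, 1 ≤ mw.1 ∧ dist mw.2 y₁ < ρ ∧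
      dist (f^[mw.1] mw.2) y < ρ := by
    intro y
    obtain ⟨n, hn, z, ⟨w', hw'U, hw'z⟩, hzV⟩ := htr (Metric.ball y₁ ρ) (Metric.ball y ρ)
      Metric.isOpen_ball ⟨y₁, Metric.mem_ball_self hρ⟩
      Metric.isOpen_ball ⟨y, Metric.mem_ball_self hρ⟩
    exact ⟨(n, w'), hn, Metric.mem_ball.mp hw'U, by rw [hw'z]; exact Metric.mem_ball.mp hzV⟩
  choose P hP1 hP2 hP3 using hPex
  choose Qc hQ1 hQ2 hQ3 using hQex
  set NM := t.sup (fun y => (P y).1) with hNM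
  set MM := t.sup (fun y => (Qc y).1) with hMM
  refine ⟨NM + MM + ℓ * ℓ + 1, by omega, ?_⟩
  intro n hn u v
  have hu' : u ∈ ⋃ y ∈ t, Metric.ball y ρ := ht (mem_univ u)
  have hv' : v ∈ ⋃ y ∈ t, Metric.ball y ρ := ht (mem_univ v)
  rw [mem_iUnion₂] at hu' hv'
  obtain ⟨tu, htu, hutu⟩ := hu'
  obtain ⟨tv, htv, hvtv⟩ := hv'
  have hutu' : dist u tu < ρ := Metric.mem_ball.mp hutu
  have hvtv' : dist v tv < ρ := Metric.mem_ball.mp hvtv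
  have hc1 : ChainFrom f δ u y₁ (P tu).1 := by
    refine chain_helper hmod u y₁ (P tu).2 _ (hP1 tu) ?_ ?_ hδ
    · calc dist u (P tu).2 ≤ dist u tu + dist (P tu).2 tu := dist_triangle_right _ _ _
        _ < ρ + ρ := add_lt_add hutu' (hP2 tu)
        _ ≤ η := by linarith
    · have := hP3 tu; linarith
  have hc3 : ChainFrom f δ y₁ v (Qc tv).1 := by
    refine chain_helper hmod y₁ v (Qc tv).2 _ (hQ1 tv) ?_ ?_ hδ
    · rw [dist_comm]
      calc dist (Qc tv).2 y₁ < ρ := hQ2 tv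
        _ < η := by linarith
    · calc dist (f^[(Qc tv).1] (Qc tv).2) v
          ≤ dist (f^[(Qc tv).1] (Qc tv).2) tv + dist v tv := dist_triangle_right _ _ _
        _ < ρ + ρ := add_lt_add (hQ3 tv) hvtv'
        _ ≤ δ / 2 := by linarith
  have hn1 : (P tu).1 ≤ NM := Finset.le_sup (f := fun y => (P y).1) htu
  have hm1 : (Qc tv).1 ≤ MM := Finset.le_sup (f := fun y => (Qc y).1) htv
  have hmid : ChainFrom f δ y₁ y₁ (n - (P tu).1 - (Qc tv).1) := hloops _ (by omega)
  have hall := chainFrom_append (chainFrom_append hc1 hmid) hc3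
  rwa [(by omega : (P tu).1 + (n - (P tu).1 - (Qc tv).1) + (Qc tv).1 = n)] at hall

private lemma exists_recurrent_in (g : X → X) (hg : Continuous g) (K : Set X)
    (hKc : IsClosed K) (hKne : K.Nonempty) (hKi : MapsTo g K K) :
    ∃ z ∈ K, ∀ r > (0 : ℝ), ∃ m : ℕ, 1 ≤ m ∧ dist (g^[m] z) z < r := by
  classical
  set S : Set (Set X) := {C | C.Nonempty ∧ IsClosed C ∧ C ⊆ K ∧ MapsTo g C C} with hS
  have hKS : K ∈ S := ⟨hKne, hKc, subset_rfl, hKi⟩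
  have hchain : ∀ c ⊆ S, IsChain (· ⊆ ·) c → c.Nonempty → ∃ lb ∈ S, ∀ s ∈ c, lb ⊆ s := by
    intro c hcS hchain hcne
    haveI : Nonempty c := hcne.to_subtype
    have hdir : Directed (· ⊇ ·) (fun C : c => (C : Set X)) := by
      intro C D
      rcases hchain.total C.2 D.2 with h | h
      · exact ⟨C, subset_rfl, h⟩
      · exact ⟨D, h, subset_rfl⟩
    have hne : (⋂ C : c, (C : Set X)).Nonempty := by
      apply IsCompact.nonempty_iInter_of_directed_nonempty_isCompact_isClosed _ hdir
      · exact fun C => (hcS C.2).1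
      · exact fun C => (hcS C.2).2.1.isCompact
      · exact fun C => (hcS C.2).2.1
    refine ⟨⋂ C : c, (C : Set X), ⟨hne, ?_, ?_, ?_⟩, ?_⟩
    · exact isClosed_iInter fun C => (hcS C.2).2.1
    · obtain ⟨C⟩ := ‹Nonempty c›
      exact (iInter_subset _ C).trans (hcS C.2).2.2.1
    · intro y hy
      rw [mem_iInter] at hy ⊢
      exact fun C => (hcS C.2).2.2.2 (hy C)
    · intro s hs
      exact iInter_subset (fun C : c => (C : Set X)) ⟨s, hs⟩
  obtain ⟨C₀, hC₀K, hC₀min⟩ := zorn_superset_nonempty S hchain K hKS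
  obtain ⟨z, hz⟩ := hC₀min.1.1
  set O : Set X := closure (range fun n : ℕ => g^[n + 1] z) with hO
  have horb : ∀ n : ℕ, g^[n + 1] z ∈ C₀ := by
    intro n
    induction n with
    | zero => exact hC₀min.1.2.2.2 hz
    | succ n ih =>
        have : g^[n + 1 + 1] z = g (g^[n + 1] z) := Function.iterate_succ_apply' g (n + 1) z
        rw [this]
        exact hC₀min.1.2.2.2 ih
  have hOC₀ : O ⊆ C₀ := closure_minimal (range_subset_iff.mpr horb) hC₀min.1.2.1
  have hOS : O ∈ S := by
    refine ⟨⟨g^[1] z, subset_closure ⟨0, rfl⟩⟩, isClosed_closure, hOC₀.trans hC₀min.1.2.2.1, ?_⟩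
    intro y hy
    have h1 : g y ∈ closure (g '' (range fun n : ℕ => g^[n + 1] z)) :=
      image_closure_subset_closure_image hg ⟨y, hy, rfl⟩
    refine closure_mono ?_ h1
    rintro _ ⟨_, ⟨n, rfl⟩, rfl⟩
    exact ⟨n + 1, by simpa using Function.iterate_succ_apply' g (n + 1) z⟩
  have hOeq : O = C₀ := hC₀min.2 hOS hOC₀ |>.antisymm' hOC₀
  have hzO : z ∈ O := hOeq ▸ hz
  refine ⟨z, hC₀min.1.2.2.1 hz, ?_⟩
  intro r hr
  obtain ⟨y, hyO, hyd⟩ := Metric.mem_closure_iff.mp hzO r hr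
  obtain ⟨n, rfl⟩ := hyO
  exact ⟨n + 1, by omega, by rw [dist_comm]; exact hyd⟩

private lemma tube_recurrent (f : X → X) (hf : Continuous f) (ξ : ℕ → X) {e : ℝ}
    (q : ℕ) (hq : 1 ≤ q) (hper : ∀ t, ξ (t + q) = ξ t)
    (w : X) (hw : ∀ t, dist (f^[t] w) (ξ t) < e) :
    ∃ z : X, (∀ t, dist (f^[t] z) (ξ t) ≤ e) ∧
      ∀ r > (0 : ℝ), ∃ m : ℕ, 1 ≤ m ∧ dist (f^[m * q] z) z < r := by
  set T : Set X := {y | ∀ t, dist (f^[t] y) (ξ t) ≤ e} with hT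
  have hTc : IsClosed T := by
    have h1 : T = ⋂ t : ℕ, {y | dist (f^[t] y) (ξ t) ≤ e} := by
      ext y; simp only [hT, mem_setOf_eq, mem_iInter]
    rw [h1]
    exact isClosed_iInter fun t =>
      isClosed_le ((hf.iterate t).dist continuous_const) continuous_const
  have hTne : T.Nonempty := ⟨w, fun t => (hw t).le⟩
  have hTin : MapsTo (f^[q]) T T := by
    intro y hy t
    have h1 : f^[t] (f^[q] y) = f^[t + q] y := (Function.iterate_add_apply f t q y).symm
    show dist (f^[t] (f^[q] y)) (ξ t) ≤ e
    rw [h1, ← hper t]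
    exact hy (t + q)
  obtain ⟨z, hzT, hzrec⟩ := exists_recurrent_in (f^[q]) (hf.iterate q) T hTc hTne hTin
  refine ⟨z, hzT, ?_⟩
  intro r hr
  obtain ⟨m, hm1, hmd⟩ := hzrec r hr
  refine ⟨m, hm1, ?_⟩
  rw [Nat.mul_comm m q, Function.iterate_mul]
  exact hmd

private lemma glue_pseudo_orbit (f : X → X) {δ : ℝ} (hδ : 0 < δ) {M : ℕ} (hM : 1 ≤ M)
    (hch : ∀ (u v : X) (n : ℕ), M ≤ n →
      ∃ g : ℕ → X, g 0 = u ∧ g n = v ∧ ∀ i < n, dist (f (g i)) (g (i + 1)) < δ)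
    (k : ℕ) (hk : 1 ≤ k) (x : ℕ → X) (a b : ℕ → ℕ)
    (hab : ∀ i < k, a i ≤ b i) (hgap : ∀ i, i + 1 < k → b i + M ≤ a (i + 1))
    (p : ℕ) (hp : M + b (k - 1) - a 0 ≤ p) :
    ∃ ξ : ℕ → X, IsPseudoOrbit f δ ξ ∧ (∀ n j : ℕ, ξ (n * p + j) = ξ j) ∧
      (∀ i < k, ∀ j : ℕ, a i ≤ j → j ≤ b i → ∀ n : ℕ, ξ (n * p + j) = f^[j] (x i)) := by
  classical
  -- monotonicity facts
  have hbmono : ∀ i j, i ≤ j → j < k → b i ≤ b j := by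
    intro i j hij hjk
    induction j with
    | zero =>
        have : i = 0 := by omega
        rw [this]
    | succ j ih =>
        rcases Nat.eq_or_lt_of_le hij with h | h
        · rw [h]
        · have h1 : b i ≤ b j := ih (by omega) (by omega)
          have h2 : b j + M ≤ a (j + 1) := hgap j hjk
          have h3 : a (j + 1) ≤ b (j + 1) := hab _ hjk
          omega
  have ha0 : ∀ i, i < k → a 0 ≤ a i := by
    intro i hik
    induction i with
    | zero => exact le_refl _
    | succ i ih =>
        have h1 : a 0 ≤ a i := ih (by omega)
        have h2 : a i ≤ b i := hab _ (by omega)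
        have h3 : b i + M ≤ a (i + 1) := hgap i hik
        omega
  have ha0bk : a 0 ≤ b (k - 1) := le_trans (ha0 (k-1) (by omega)) (hab _ (by omega))
  -- the partial gluing
  have hGL : ∀ i, i < k → ∃ c : ℕ → X,
      (∀ u, dist (f (c u)) (c (u + 1)) < δ) ∧
      (∀ j, j ≤ i → ∀ u, a j - a 0 ≤ u → u ≤ b j - a 0 → c u = f^[u + a 0] (x j)) ∧
      (∀ u, b i - a 0 ≤ u → c u = f^[u + a 0] (x i)) := by
    intro i
    induction i with
    | zero =>
        intro _
        refine ⟨fun u => f^[u + a 0] (x 0), ?_, ?_, ?_⟩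
        · intro u
          dsimp only
          have : f^[u + 1 + a 0] (x 0) = f (f^[u + a 0] (x 0)) := by
            rw [(by omega : u + 1 + a 0 = (u + a 0) + 1), Function.iterate_succ_apply']
          rw [this, dist_self]
          exact hδ
        · intro j hj u _ _
          have : j = 0 := by omega
          rw [this]
        · intro u _; rfl
    | succ i ih =>
        intro hik
        obtain ⟨c, hcgap, hcblock, hctail⟩ := ih (by omega)
        have hik' : i < k := by omega
        have haibi : a i ≤ b i := hab _ hik'
        have h2 : b i + M ≤ a (i + 1) := hgap i hik
        have ha0i : a 0 ≤ a i := ha0 i hik'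
        have ha0i1 : a 0 ≤ a (i + 1) := ha0 (i + 1) hik
        set Bi := b i - a 0 with hBi
        set A1 := a (i + 1) - a 0 with hA1
        have hBiA1 : Bi + M ≤ A1 := by omega
        set L := A1 - Bi with hL
        have hLM : M ≤ L := by omega
        obtain ⟨g, hg0, hgL, hggap⟩ := hch (f^[b i] (x i)) (f^[a (i + 1)] (x (i + 1))) L hLM
        refine ⟨fun u => if u ≤ Bi then c u else if u < A1 then g (u - Bi)
          else f^[u + a 0] (x (i + 1)), ?_, ?_, ?_⟩
        · -- gaps
          intro u
          dsimp only
          by_cases h1 : u + 1 ≤ Bi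
          · rw [if_pos (by omega : u ≤ Bi), if_pos h1]
            exact hcgap u
          · by_cases h2' : u ≤ Bi
            · -- u = Bi
              have hu : u = Bi := by omega
              have e1 : (if u ≤ Bi then c u else if u < A1 then g (u - Bi)
                  else f^[u + a 0] (x (i + 1))) = g 0 := by
                rw [if_pos h2', hu, hctail Bi (le_refl _),
                  (by omega : Bi + a 0 = b i), hg0]
              by_cases h3 : u + 1 < A1
              · have e2 : (if u + 1 ≤ Bi then c (u + 1) else if u + 1 < A1 then g (u + 1 - Bi)
                    else f^[u + 1 + a 0] (x (i + 1))) = g 1 := by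
                  rw [if_neg h1, if_pos h3, hu, (by omega : Bi + 1 - Bi = 1)]
                rw [e1, e2]
                exact hggap 0 (by omega)
              · -- u + 1 = A1, L = 1
                have hA1u : u + 1 = A1 := by omega
                have hL1 : L = 1 := by omega
                have e2 : (if u + 1 ≤ Bi then c (u + 1) else if u + 1 < A1 then g (u + 1 - Bi)
                    else f^[u + 1 + a 0] (x (i + 1))) = g 1 := by
                  rw [if_neg h1, if_neg h3, (by omega : u + 1 + a 0 = a (i + 1)), ← hgL, hL1]
                rw [e1, e2]
                exact hggap 0 (by omega)
            · -- Bi < u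
              by_cases h4 : u < A1
              · have e1 : (if u ≤ Bi then c u else if u < A1 then g (u - Bi)
                    else f^[u + a 0] (x (i + 1))) = g (u - Bi) := by
                  rw [if_neg h2', if_pos h4]
                by_cases h5 : u + 1 < A1
                · have e2 : (if u + 1 ≤ Bi then c (u + 1) else if u + 1 < A1 then g (u + 1 - Bi)
                      else f^[u + 1 + a 0] (x (i + 1))) = g (u - Bi + 1) := by
                    rw [if_neg h1, if_pos h5, (by omega : u + 1 - Bi = u - Bi + 1)]
                  rw [e1, e2]
                  exact hggap (u - Bi) (by omega)
                · have hA1u : u + 1 = A1 := by omega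
                  have e2 : (if u + 1 ≤ Bi then c (u + 1) else if u + 1 < A1 then g (u + 1 - Bi)
                      else f^[u + 1 + a 0] (x (i + 1))) = g (u - Bi + 1) := by
                    rw [if_neg h1, if_neg h5, (by omega : u + 1 + a 0 = a (i + 1)), ← hgL,
                      (by omega : L = u - Bi + 1)]
                  rw [e1, e2]
                  exact hggap (u - Bi) (by omega)
              · -- u ≥ A1
                have e1 : (if u ≤ Bi then c u else if u < A1 then g (u - Bi)
                    else f^[u + a 0] (x (i + 1))) = f^[u + a 0] (x (i + 1)) := by
                  rw [if_neg h2', if_neg h4]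
                have e2 : (if u + 1 ≤ Bi then c (u + 1) else if u + 1 < A1 then g (u + 1 - Bi)
                    else f^[u + 1 + a 0] (x (i + 1))) = f^[u + 1 + a 0] (x (i + 1)) := by
                  rw [if_neg h1, if_neg (by omega : ¬ u + 1 < A1)]
                rw [e1, e2, (by omega : u + 1 + a 0 = (u + a 0) + 1),
                  Function.iterate_succ_apply', dist_self]
                exact hδ
        · -- blocks
          intro j hj u hu1 hu2
          dsimp only
          by_cases hji : j ≤ i
          · have hbj : b j ≤ b i := hbmono j i hji hik'
            rw [if_pos (by omega : u ≤ Bi)]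
            exact hcblock j hji u hu1 hu2
          · have hj1 : j = i + 1 := by omega
            subst hj1
            rw [if_neg (by omega : ¬ u ≤ Bi), if_neg (by omega : ¬ u < A1)]
        · -- tail
          intro u hu
          have hai1bi1 : a (i + 1) ≤ b (i + 1) := hab _ hik
          dsimp only
          rw [if_neg (by omega : ¬ u ≤ Bi), if_neg (by omega : ¬ u < A1)]
  obtain ⟨c, hcgap, hcblock, hctail⟩ := hGL (k - 1) (by omega)
  have hBk : b (k - 1) - a 0 + M ≤ p := by omega
  set Bk := b (k - 1) - a 0 with hBkdef
  set L := p - Bk with hLdef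
  have hLM : M ≤ L := by omega
  have hBkL : Bk + L = p := by omega
  have hp0 : 0 < p := by omega
  obtain ⟨g, hg0, hgL, hggap⟩ := hch (f^[b (k - 1)] (x (k - 1))) (f^[a 0] (x 0)) L hLM
  set Cyc : ℕ → X := fun u => if u ≤ Bk then c u else g (u - Bk) with hCyc
  have hc0 : Cyc 0 = f^[a 0] (x 0) := by
    rw [hCyc]
    dsimp only
    rw [if_pos (by omega : (0:ℕ) ≤ Bk)]
    have := hcblock 0 (by omega) 0 (by omega) (by omega)
    rw [this, (by omega : 0 + a 0 = a 0)]
  have hcBk : c Bk = g 0 := by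
    rw [hctail Bk (le_refl _), (by omega : Bk + a 0 = b (k - 1)), hg0]
  have hCgap : ∀ v, v < p → dist (f (Cyc v)) (Cyc ((v + 1) % p)) < δ := by
    intro v hv
    by_cases h1 : v + 1 ≤ Bk
    · have hm : (v + 1) % p = v + 1 := Nat.mod_eq_of_lt (by omega)
      rw [hm, hCyc]
      dsimp only
      rw [if_pos (by omega : v ≤ Bk), if_pos h1]
      exact hcgap v
    · -- v ≥ Bk : in the wrap chain region
      have e1 : Cyc v = g (v - Bk) := by
        rw [hCyc]
        dsimp only
        by_cases h2 : v ≤ Bk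
        · have hv' : v = Bk := by omega
          rw [if_pos h2, hv', hcBk, (by omega : Bk - Bk = 0)]
        · rw [if_neg h2]
      have e2 : Cyc ((v + 1) % p) = g (v - Bk + 1) := by
        by_cases h3 : v + 1 < p
        · have hm : (v + 1) % p = v + 1 := Nat.mod_eq_of_lt h3
          rw [hm, hCyc]
          dsimp only
          rw [if_neg (by omega : ¬ v + 1 ≤ Bk), (by omega : v + 1 - Bk = v - Bk + 1)]
        · have hv1 : v + 1 = p := by omega
          have hm : (v + 1) % p = 0 := by rw [hv1, Nat.mod_self]
          rw [hm, hc0, ← hgL, (by omega : L = v - Bk + 1)]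
      rw [e1, e2]
      exact hggap (v - Bk) (by omega)
  set sh := p - a 0 % p with hsh
  refine ⟨fun t => Cyc ((t + sh) % p), ?_, ?_, ?_⟩
  · -- pseudo-orbit
    intro t
    dsimp only
    have hv : (t + sh) % p < p := Nat.mod_lt _ hp0
    have he : (t + 1 + sh) % p = ((t + sh) % p + 1) % p := by
      rw [(by omega : t + 1 + sh = t + sh + 1), ← Nat.mod_add_mod]
    rw [he]
    exact hCgap _ hv
  · -- periodicity
    intro n j
    dsimp only
    have : n * p + j + sh = j + sh + n * p := by ring
    rw [this, Nat.add_mul_mod_self_right]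
  · -- block values
    intro i hik j hj1 hj2 n
    dsimp only
    have ha0i : a 0 ≤ a i := ha0 i hik
    have hbibk : b i ≤ b (k - 1) := by
      rcases Nat.eq_or_lt_of_le (by omega : i ≤ k - 1) with h | h
      · rw [h]
      · exact hbmono i (k - 1) (by omega) (by omega)
    have hjlt : j - a 0 < p := by omega
    have hmod : (n * p + j + sh) % p = j - a 0 := by
      have hd := Nat.div_add_mod (a 0) p
      have hm : a 0 % p < p := Nat.mod_lt _ hp0
      have : n * p + j + sh = (j - a 0) + (n + a 0 / p + 1) * p := by
        have : (n + a 0 / p + 1) * p = n * p + p * (a 0 / p) + p := by ring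
        omega
      rw [this, Nat.add_mul_mod_self_right, Nat.mod_eq_of_lt hjlt]
    rw [hmod, hCyc]
    dsimp only
    rw [if_pos (by omega : j - a 0 ≤ Bk)]
    have := hcblock i (by omega) (j - a 0) (by omega) (by omega)
    rw [this, (by omega : j - a 0 + a 0 = j)]

end AuxWMS

theorem weak_mixing_shadowing_regrec_specification [MetricSpace X] [CompactSpace X]
    (f : X → X) (hf : Continuous f) (hwm : WeaklyMixing f) (hsh : HasShadowing f) :
    ∀ ε > (0 : ℝ), ∃ M : ℕ, 0 < M ∧
      ∀ k : ℕ, 2 ≤ k → ∀ x : ℕ → X, ∀ a b : ℕ → ℕ,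
        (∀ i < k, a i ≤ b i) →
        (∀ i, i + 1 < k → b i + M ≤ a (i + 1)) →
        ∀ p : ℕ, M + b (k - 1) - a 0 ≤ p →
        ∃ z : X, RegRecPt f z ∧
          (∀ n j : ℕ, dist (f^[j] z) (f^[n * p + j] z) < ε) ∧
          (∀ i < k, ∀ j : ℕ, a i ≤ j → j ≤ b i → ∀ n : ℕ,
            dist (f^[n * p + j] z) (f^[j] (x i)) < ε) := by
  intro ε hε
  rcases isEmpty_or_nonempty X with hX | hX
  · exact ⟨1, one_pos, fun k hk x a b hab hgap p hp => (hX.false (x 0)).elim⟩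
  set ε' : ℝ := ε / 8 with hε'def
  have hε' : 0 < ε' := by positivity
  obtain ⟨δ₀, hδ₀, hδ₀sh⟩ := hsh ε' hε'
  obtain ⟨M, hM1, hch⟩ := chain_mixing f hf hwm hδ₀
  refine ⟨M, by omega, ?_⟩
  intro k hk x a b hab hgap p hp
  have hk1 : 1 ≤ k := by omega
  obtain ⟨ξ, hξpo, hξper, hξblock⟩ := glue_pseudo_orbit f hδ₀ hM1
    (fun u v n hn => hch n hn u v) k hk1 x a b hab hgap p hp
  have ha0bk : a 0 ≤ b (k - 1) := by
    have h : ∀ j, j < k → a 0 ≤ b j := by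
      intro j
      induction j with
      | zero => intro h; exact hab 0 h
      | succ j ih =>
          intro h
          have h1 : a 0 ≤ b j := ih (by omega)
          have h2 : b j + M ≤ a (j + 1) := hgap j h
          have h3 : a (j + 1) ≤ b (j + 1) := hab _ h
          omega
    exact h (k - 1) (by omega)
  have hp1 : 1 ≤ p := by omega
  -- base point
  obtain ⟨w₀, hw₀⟩ := hδ₀sh ξ hξpo
  have hξq : ∀ t, ξ (t + p) = ξ t := by
    intro t
    have := hξper 1 t
    rwa [one_mul, Nat.add_comm] at this
  obtain ⟨z₀, hz₀T, hz₀rec⟩ := tube_recurrent f hf ξ p hp1 hξq w₀ hw₀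
  -- the inductive construction
  set Inv : X × ℕ → Prop :=
    fun d => (1 ≤ d.2 ∧ p ∣ d.2) ∧
      ∀ r > (0:ℝ), ∃ m : ℕ, 1 ≤ m ∧ dist (f^[m * d.2] d.1) d.1 < r with hInv
  have hstep : ∀ (s : ℕ) (d : X × ℕ), Inv d → ∃ d' : X × ℕ, Inv d' ∧ d.2 ∣ d'.2 ∧
      ∀ t, dist (f^[t] d'.1) (f^[t % d'.2] d.1) ≤ ε' / 2 ^ (s + 1) := by
    intro s d hd
    obtain ⟨⟨hq1, hqp⟩, hrec⟩ := hd
    have hpos : (0:ℝ) < ε' / 2 ^ (s + 1) := by positivity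
    obtain ⟨δ', hδ'0, hδ'sh⟩ := hsh (ε' / 2 ^ (s + 1)) hpos
    obtain ⟨m, hm1, hmd⟩ := hrec δ' hδ'0
    set q' := m * d.2 with hq'def
    have hq'1 : 1 ≤ q' := by
      have := Nat.mul_pos (by omega : 0 < m) (by omega : 0 < d.2)
      omega
    set ξ' : ℕ → X := fun t => f^[t % q'] d.1 with hξ'
    have hξ'po : IsPseudoOrbit f δ' ξ' := by
      intro t
      have hmod : (t % q' + 1) % q' = (t + 1) % q' := Nat.mod_add_mod t q' 1
      by_cases hc : t % q' + 1 = q'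
      · have h0 : (t + 1) % q' = 0 := by rw [← hmod, hc, Nat.mod_self]
        show dist (f (f^[t % q'] d.1)) (f^[(t + 1) % q'] d.1) < δ'
        have h2 : f (f^[t % q'] d.1) = f^[t % q' + 1] d.1 :=
          (Function.iterate_succ_apply' f (t % q') d.1).symm
        rw [h0, Function.iterate_zero_apply, h2, hc]
        exact hmd
      · have hlt : t % q' < q' := Nat.mod_lt _ (by omega)
        have h0 : (t + 1) % q' = t % q' + 1 := by
          rw [← hmod, Nat.mod_eq_of_lt (by omega)]
        show dist (f (f^[t % q'] d.1)) (f^[(t + 1) % q'] d.1) < δ'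
        rw [h0, Function.iterate_succ_apply', dist_self]
        exact hδ'0
    obtain ⟨w, hw⟩ := hδ'sh ξ' hξ'po
    have hper' : ∀ t, ξ' (t + q') = ξ' t := by
      intro t
      show f^[(t + q') % q'] d.1 = f^[t % q'] d.1
      rw [Nat.add_mod_right]
    obtain ⟨z', hz'T, hz'rec⟩ := tube_recurrent f hf ξ' q' hq'1 hper' w hw
    exact ⟨(z', q'), ⟨⟨hq'1, dvd_trans hqp (dvd_mul_left d.2 m)⟩, hz'rec⟩,
      dvd_mul_left d.2 m, fun t => hz'T t⟩
  have hInv0 : Inv (z₀, p) := ⟨⟨hp1, dvd_refl p⟩, hz₀rec⟩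
  let F : ℕ → {d : X × ℕ // Inv d} → {d : X × ℕ // Inv d} :=
    fun s d => ⟨(hstep s d.1 d.2).choose, (hstep s d.1 d.2).choose_spec.1⟩
  let ZQ : ℕ → {d : X × ℕ // Inv d} :=
    fun n => Nat.rec ⟨(z₀, p), hInv0⟩ (fun s ih => F s ih) n
  set Z : ℕ → X := fun s => (ZQ s).1.1 with hZdef
  set Q : ℕ → ℕ := fun s => (ZQ s).1.2 with hQdef
  have hQ1 : ∀ s, 1 ≤ Q s := fun s => (ZQ s).2.1.1
  have hQp : ∀ s, p ∣ Q s := fun s => (ZQ s).2.1.2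
  have hQd : ∀ s, Q s ∣ Q (s + 1) :=
    fun s => (hstep s (ZQ s).1 (ZQ s).2).choose_spec.2.1
  have hcomp : ∀ s t, dist (f^[t] (Z (s + 1))) (f^[t % Q (s + 1)] (Z s)) ≤ ε' / 2 ^ (s + 1) :=
    fun s t => (hstep s (ZQ s).1 (ZQ s).2).choose_spec.2.2 t
  have hQ0 : Q 0 = p := rfl
  have hZ0 : ∀ t, dist (f^[t] (Z 0)) (ξ t) ≤ ε' := hz₀T
  have hQmono : ∀ i j, i ≤ j → Q i ∣ Q j := by
    intro i j hij
    induction j with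
    | zero =>
        have h : i = 0 := by omega
        rw [h]
    | succ j ih =>
        rcases Nat.eq_or_lt_of_le hij with h | h
        · rw [h]
        · exact dvd_trans (ih (by omega)) (hQd j)
  have hximod : ∀ q t : ℕ, p ∣ q → 0 < q → ξ t = ξ (t % q) := by
    intro q t hdvd hq0
    obtain ⟨c, hc⟩ := hdvd
    have h1 : q * (t / q) + t % q = t := Nat.div_add_mod t q
    have h2 : q * (t / q) = t / q * c * p := by rw [hc]; ring
    have h3 : t = t / q * c * p + t % q := by omega
    calc ξ t = ξ (t / q * c * p + t % q) := by conv_lhs => rw [h3]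
      _ = ξ (t % q) := hξper _ _
  -- Cauchy sequence and limit
  have hZd : ∀ s, dist (Z s) (Z (s + 1)) ≤ 2 * ε' / 2 / 2 ^ s := by
    intro s
    have h := hcomp s 0
    simp only [Function.iterate_zero_apply, Nat.zero_mod] at h
    rw [dist_comm]
    calc dist (Z (s + 1)) (Z s) ≤ ε' / 2 ^ (s + 1) := h
      _ ≤ ε' / 2 ^ s := by
          gcongr
          · exact one_le_two
          · omega
      _ = 2 * ε' / 2 / 2 ^ s := by ring
  have hcauchy : CauchySeq Z := cauchySeq_of_le_geometric_two hZd
  obtain ⟨z, hz⟩ := cauchySeq_tendsto_of_complete hcauchy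
  have hiter_tendsto : ∀ t : ℕ, Filter.Tendsto (fun s => f^[t] (Z s)) Filter.atTop (nhds (f^[t] z)) :=
    fun t => ((hf.iterate t).tendsto z).comp hz
  have claim2 : ∀ s t, dist (f^[t] (Z s)) (ξ t) ≤ 2 * ε' - ε' / 2 ^ s := by
    intro s
    induction s with
    | zero =>
        intro t
        have h := hZ0 t
        rw [pow_zero]
        linarith
    | succ s ih =>
        intro t
        have h1 := hcomp s t
        have h2 := ih (t % Q (s + 1))
        have h3 : ξ (t % Q (s + 1)) = ξ t :=
          (hximod (Q (s + 1)) t (hQp (s + 1)) (by have := hQ1 (s + 1); omega)).symm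
        have hh : ε' / 2 ^ (s + 1) + ε' / 2 ^ (s + 1) = ε' / 2 ^ s := by
          rw [pow_succ]; field_simp; ring
        calc dist (f^[t] (Z (s + 1))) (ξ t)
            ≤ dist (f^[t] (Z (s + 1))) (f^[t % Q (s + 1)] (Z s)) +
              dist (f^[t % Q (s + 1)] (Z s)) (ξ t) := dist_triangle _ _ _
          _ ≤ ε' / 2 ^ (s + 1) + (2 * ε' - ε' / 2 ^ s) := by
              rw [← h3]
              exact add_le_add h1 h2
          _ ≤ 2 * ε' - ε' / 2 ^ (s + 1) := by linarith
  have claim3 : ∀ m, 1 ≤ m → ∀ s, m ≤ s → ∀ n,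
      dist (f^[n * Q m] (Z s)) (Z s) ≤ 4 * (ε' / 2 ^ m) - 2 * (ε' / 2 ^ s) := by
    intro m hm1
    refine Nat.le_induction ?_ ?_
    · intro n
      obtain ⟨s₀, hs₀⟩ : ∃ s₀, m = s₀ + 1 := ⟨m - 1, by omega⟩
      rw [hs₀]
      have h1 := hcomp s₀ (n * Q (s₀ + 1))
      rw [Nat.mul_mod_left] at h1
      simp only [Function.iterate_zero_apply] at h1
      have h2 := hcomp s₀ 0
      simp only [Function.iterate_zero_apply, Nat.zero_mod] at h2
      calc dist (f^[n * Q (s₀ + 1)] (Z (s₀ + 1))) (Z (s₀ + 1))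
          ≤ dist (f^[n * Q (s₀ + 1)] (Z (s₀ + 1))) (Z s₀) + dist (Z s₀) (Z (s₀ + 1)) :=
            dist_triangle _ _ _
        _ ≤ ε' / 2 ^ (s₀ + 1) + ε' / 2 ^ (s₀ + 1) :=
            add_le_add h1 (by rw [dist_comm]; exact h2)
        _ ≤ 4 * (ε' / 2 ^ (s₀ + 1)) - 2 * (ε' / 2 ^ (s₀ + 1)) := by
            have : (0:ℝ) < ε' / 2 ^ (s₀ + 1) := by positivity
            linarith
    · intro s hs ih n
      have hQmd : Q m ∣ Q (s + 1) := hQmono m (s + 1) (by omega)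
      have hdt : Q m ∣ n * Q m := dvd_mul_left (Q m) n
      have hdr : Q m ∣ (n * Q m) % Q (s + 1) := by
        have h5 : (n * Q m) % Q (s + 1) + Q (s + 1) * ((n * Q m) / Q (s + 1)) = n * Q m :=
          Nat.mod_add_div _ _
        have h6 : Q m ∣ Q (s + 1) * ((n * Q m) / Q (s + 1)) := hQmd.mul_right _
        have h7 : (n * Q m) % Q (s + 1) = n * Q m - Q (s + 1) * ((n * Q m) / Q (s + 1)) := by
          omega
        rw [h7]
        exact Nat.dvd_sub hdt h6
      obtain ⟨n', hn'⟩ := hdr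
      have h1 := hcomp s (n * Q m)
      have h2 := ih n'
      have h3 := hcomp s 0
      simp only [Function.iterate_zero_apply, Nat.zero_mod] at h3
      have hh : ε' / 2 ^ (s + 1) + ε' / 2 ^ (s + 1) = ε' / 2 ^ s := by
        rw [pow_succ]; field_simp; ring
      calc dist (f^[n * Q m] (Z (s + 1))) (Z (s + 1))
          ≤ dist (f^[n * Q m] (Z (s + 1))) (f^[(n * Q m) % Q (s + 1)] (Z s)) +
            dist (f^[(n * Q m) % Q (s + 1)] (Z s)) (Z s) + dist (Z s) (Z (s + 1)) :=
            dist_triangle4 _ _ _ _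
        _ ≤ ε' / 2 ^ (s + 1) + (4 * (ε' / 2 ^ m) - 2 * (ε' / 2 ^ s)) + ε' / 2 ^ (s + 1) := by
            refine add_le_add (add_le_add h1 ?_) (by rw [dist_comm]; exact h3)
            rw [hn', Nat.mul_comm]
            exact h2
        _ ≤ 4 * (ε' / 2 ^ m) - 2 * (ε' / 2 ^ (s + 1)) := by linarith
  have lim2 : ∀ t, dist (f^[t] z) (ξ t) ≤ 2 * ε' := by
    intro t
    have htd : Filter.Tendsto (fun s => dist (f^[t] (Z s)) (ξ t)) Filter.atTop
        (nhds (dist (f^[t] z) (ξ t))) := (hiter_tendsto t).dist tendsto_const_nhds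
    refine le_of_tendsto htd (Filter.Eventually.of_forall fun s => ?_)
    have h := claim2 s t
    have h2 : (0:ℝ) < ε' / 2 ^ s := by positivity
    linarith
  have lim3 : ∀ m, 1 ≤ m → ∀ n, dist (f^[n * Q m] z) z ≤ 4 * (ε' / 2 ^ m) := by
    intro m hm n
    have htd : Filter.Tendsto (fun s => dist (f^[n * Q m] (Z s)) (Z s)) Filter.atTop
        (nhds (dist (f^[n * Q m] z) z)) := (hiter_tendsto _).dist hz
    refine le_of_tendsto htd ?_
    filter_upwards [Filter.eventually_ge_atTop m] with s hs
    have h := claim3 m hm s hs n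
    have h2 : (0:ℝ) < ε' / 2 ^ s := by positivity
    linarith
  refine ⟨z, ?_, ?_, ?_⟩
  · -- regular recurrence
    intro U hU
    obtain ⟨r, hr, hball⟩ := Metric.mem_nhds_iff.mp hU
    obtain ⟨m0, hm0⟩ := exists_pow_lt_of_lt_one
      (show (0:ℝ) < r / (4 * ε') by positivity) (by norm_num : (1:ℝ)/2 < 1)
    set m := max m0 1 with hmdef
    have hm1 : 1 ≤ m := le_max_right _ _
    have hmb : 4 * (ε' / 2 ^ m) < r := by
      have h1 : ((1:ℝ)/2) ^ m ≤ ((1:ℝ)/2) ^ m0 :=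
        pow_le_pow_of_le_one (by norm_num) (by norm_num) (le_max_left _ _)
      have h2 : ((1:ℝ)/2) ^ m < r / (4 * ε') := lt_of_le_of_lt h1 hm0
      have h3 : ((1:ℝ)/2) ^ m = 1 / 2 ^ m := by rw [div_pow, one_pow]
      rw [h3] at h2
      calc 4 * (ε' / 2 ^ m) = 4 * ε' * (1 / 2 ^ m) := by ring
        _ < 4 * ε' * (r / (4 * ε')) := by
            apply mul_lt_mul_of_pos_left h2 (by positivity)
        _ = r := by field_simp
    refine ⟨Q m, hQ1 m, fun n => hball ?_⟩
    rw [Metric.mem_ball]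
    calc dist (f^[Q m * n] z) z = dist (f^[n * Q m] z) z := by rw [Nat.mul_comm]
      _ ≤ 4 * (ε' / 2 ^ m) := lim3 m hm1 n
      _ < r := hmb
  · intro n j
    have h1 := lim2 j
    have h2 := lim2 (n * p + j)
    have h3 : ξ (n * p + j) = ξ j := hξper n j
    rw [h3] at h2
    calc dist (f^[j] z) (f^[n * p + j] z)
        ≤ dist (f^[j] z) (ξ j) + dist (f^[n * p + j] z) (ξ j) := dist_triangle_right _ _ _
      _ ≤ 2 * ε' + 2 * ε' := add_le_add h1 h2
      _ < ε := by rw [hε'def] at *; linarith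
  · intro i hik j hj1 hj2 n
    have h2 := lim2 (n * p + j)
    have h3 : ξ (n * p + j) = f^[j] (x i) := hξblock i hik j hj1 hj2 n
    rw [h3] at h2
    calc dist (f^[n * p + j] z) (f^[j] (x i)) ≤ 2 * ε' := h2
      _ < ε := by rw [hε'def] at *; linarith
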